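/- Let (T,X) be a topological semiflow on a uniform space (X,𝓤). If (T,X) is syndetically transitive and is not sensitive to initial conditions, then (T,X) is minimal, i.e., the orbit T•x is dense in X for every x ∈ X. -/

import Mathlib

open Filter Topology Set Uniformity

/-- A subset `B` of a topological monoid `T` is *syndetic* if there is a compact set
`K ⊆ T` such that `K·t` meets `B` for every `t ∈ T`. -/
def Syndetic {T : Type*} [Monoid T] [TopologicalSpace T] (B : Set T) : Prop :=
  ∃ K : Set T, IsCompact K ∧ ∀ t : T, ∃ k ∈ K, k * t ∈ B

/-- The hitting-time set `N_T(U,V) = {t ∈ T : ∃ x ∈ U, t • x ∈ V}`. -/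
def HittingTimes (T : Type*) {X : Type*} [Monoid T] [MulAction T X] (U V : Set X) : Set T :=
  {t : T | ∃ x ∈ U, t • x ∈ V}

/-- If a topological semiflow `(T,X)` on a uniform space is syndetically transitive and
not sensitive to initial conditions, then it is minimal: every orbit is dense. -/
theorem syndeticallyTransitive_not_sensitive_implies_minimal
    {T X : Type*} [Monoid T] [TopologicalSpace T] [ContinuousMul T]
    [UniformSpace X] [MulAction T X] [ContinuousSMul T X]
    (hsynd : ∀ U V : Set X, IsOpen U → U.Nonempty → IsOpen V → V.Nonempty →
      Syndetic (HittingTimes T U V))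
    (hnotsens : ¬ ∃ ε ∈ 𝓤 X, ∀ x : X, ∀ V ∈ 𝓝 x, ∃ y ∈ V, ∃ t : T, (t • x, t • y) ∉ ε) :
    ∀ x : X, Dense (MulAction.orbit T x) := by
  push_neg at hnotsens
  -- hnotsens : ∀ ε ∈ 𝓤 X, ∃ x, ∃ V ∈ 𝓝 x, ∀ y ∈ V, ∀ t, (t • x, t • y) ∈ ε
  intro x
  rw [dense_iff_inter_open]
  intro W hW hWne
  obtain ⟨w, hw⟩ := hWne
  -- pick entourages
  obtain ⟨ε₀, hε₀, hball⟩ := UniformSpace.mem_nhds_iff.mp (hW.mem_nhds hw)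
  obtain ⟨ε₁, hε₁, hcomp₁⟩ := comp_mem_uniformity_sets hε₀
  obtain ⟨ε₂, hε₂, hcomp₂⟩ := comp_mem_uniformity_sets hε₁
  obtain ⟨ε, ⟨hε, hεo, hεs⟩, hεsub⟩ := uniformity_hasBasis_open_symmetric.mem_iff.mp hε₂
  -- a stable point for ε
  obtain ⟨x₀, V₀, hV₀, hstab⟩ := hnotsens ε hε
  set U₀ : Set X := interior V₀ with hU₀def
  have hx₀ : x₀ ∈ U₀ := mem_interior_iff_mem_nhds.mpr hV₀
  have hstab' : ∀ y ∈ U₀, ∀ t : T, (t • x₀, t • y) ∈ ε := fun y hy t =>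
    hstab y (interior_subset hy) t
  -- the target ball around w
  set B : Set X := UniformSpace.ball w ε with hBdef
  have hBo : IsOpen B := UniformSpace.isOpen_ball w hεo
  have hwB : w ∈ B := UniformSpace.mem_ball_self w hε
  -- syndeticity of N(U₀, B)
  obtain ⟨K, hKc, hKsynd⟩ :=
    hsynd U₀ B isOpen_interior ⟨x₀, hx₀⟩ hBo ⟨w, hwB⟩
  -- equicontinuity of K at x via the tube lemma
  have hf : Continuous fun p : T × X => ((p.1 • x, p.1 • p.2) : X × X) :=
    (continuous_fst.smul continuous_const).prodMk (continuous_fst.smul continuous_snd)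
  have hKx : K ×ˢ ({x} : Set X) ⊆ (fun p : T × X => ((p.1 • x, p.1 • p.2) : X × X)) ⁻¹' ε := by
    rintro ⟨k, y⟩ ⟨-, hy⟩
    rcases hy with rfl
    exact refl_mem_uniformity hε
  obtain ⟨A, V, hAo, hVo, hKA, hxV, htube⟩ :=
    generalized_tube_lemma hKc isCompact_singleton (hεo.preimage hf) hKx
  have hxV' : x ∈ V := hxV rfl
  -- transitivity: find s and z ∈ U₀ with s • z ∈ V
  obtain ⟨K', -, hK'⟩ := hsynd U₀ V isOpen_interior ⟨x₀, hx₀⟩ hVo ⟨x, hxV'⟩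
  obtain ⟨k', -, hk'⟩ := hK' 1
  obtain ⟨z, hz, hszV⟩ := hk'
  set s : T := k' * 1 with hsdef
  -- syndeticity: find k ∈ K with k * s ∈ N(U₀, B)
  obtain ⟨k, hkK, hksN⟩ := hKsynd s
  obtain ⟨z', hz', hz'B⟩ := hksN
  -- the chain of ε-estimates
  have h1 : (k • x, (k * s) • z) ∈ ε := by
    have h1' : (k • x, k • (s • z)) ∈ ε :=
      htube (Set.mk_mem_prod (hKA hkK) hszV)
    rwa [mul_smul]
  have h2 : ((k * s) • x₀, (k * s) • z) ∈ ε := hstab' z hz (k * s)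
  have h3 : ((k * s) • x₀, (k * s) • z') ∈ ε := hstab' z' hz' (k * s)
  have h4 : (w, (k * s) • z') ∈ ε := hz'B
  have a1 : (w, (k * s) • x₀) ∈ ε₁ :=
    hcomp₂ (SetRel.prodMk_mem_comp (hεsub h4) (hεsub (haveI := hεs; SetRel.symm ε h3)))
  have a2 : ((k * s) • x₀, k • x) ∈ ε₁ :=
    hcomp₂ (SetRel.prodMk_mem_comp (hεsub h2) (hεsub (haveI := hεs; SetRel.symm ε h1)))
  have hfinal : k • x ∈ W := hball (hcomp₁ (SetRel.prodMk_mem_comp a1 a2))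
  exact ⟨k • x, hfinal, MulAction.mem_orbit x k⟩
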